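/- arXiv:1904.08523 — 2 statements merged into one kernel-verified Lean document; each statement's English description precedes it below -/
import Mathlib

section
/- Let h and (h_y)_{y∈Y} (Y a countable index set) be independent exponential random variables with mean 1, and let (a_y)_{y∈Y} be nonnegative reals with ∑_y a_y < ∞. For t > 0, P(h > t · ∑_y h_y a_y) = ∏_y 1/(1 + t a_y). -/
open MeasureTheory ProbabilityTheory Real Set Filter Topology
open scoped ENNReal

section Aux
lemma expMeasure_Iio_zero : expMeasure 1 (Iio 0) = 0 := by
  rw [show expMeasure 1 = (volume : Measure ℝ).withDensity (exponentialPDF 1) from rfl,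
    withDensity_apply _ measurableSet_Iio]
  exact lintegral_exponentialPDF_of_nonpos le_rfl

lemma expMeasure_Ioi {c : ℝ} (hc : 0 ≤ c) :
    expMeasure 1 (Ioi c) = ENNReal.ofReal (Real.exp (-c)) := by
  rw [show expMeasure 1 = (volume : Measure ℝ).withDensity (exponentialPDF 1) from rfl,
    withDensity_apply _ measurableSet_Ioi]
  have h1 : ∀ x ∈ Ioi c, exponentialPDF 1 x = ENNReal.ofReal (Real.exp (-x)) := by
    intro x hx
    rw [exponentialPDF_of_nonneg (hc.trans (le_of_lt hx))]
    norm_num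
  rw [setLIntegral_congr_fun measurableSet_Ioi h1,
    ← ofReal_integral_eq_lintegral_ofReal]
  · rw [integral_exp_neg_Ioi]
  · have := exp_neg_integrableOn_Ioi c (one_pos)
    simpa [IntegrableOn] using this
  · exact Filter.Eventually.of_forall fun x => (Real.exp_pos _).le
lemma expMeasure_laplace {c : ℝ} (hc : 0 < 1 + c) :
    ∫⁻ x, ENNReal.ofReal (Real.exp (-(c * x))) ∂(expMeasure 1)
      = ENNReal.ofReal (1 / (1 + c)) := by
  have hm : Measurable (exponentialPDF 1) := (measurable_exponentialPDFReal 1).ennreal_ofReal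
  rw [show expMeasure 1 = (volume : Measure ℝ).withDensity (exponentialPDF 1) from rfl,
    lintegral_withDensity_eq_lintegral_mul _ hm
      ((by fun_prop : Measurable fun x : ℝ => Real.exp (-(c * x))).ennreal_ofReal)]
  have key : ∀ x : ℝ, exponentialPDF 1 x * ENNReal.ofReal (Real.exp (-(c * x)))
      = ENNReal.ofReal (1 / (1 + c)) * exponentialPDF (1 + c) x := by
    intro x
    rw [exponentialPDF_eq, exponentialPDF_eq]
    by_cases hx : 0 ≤ x
    · rw [if_pos hx, if_pos hx, ← ENNReal.ofReal_mul (by positivity),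
        ← ENNReal.ofReal_mul (by positivity)]
      congr 1
      rw [one_div, one_mul, ← Real.exp_add, ← mul_assoc, inv_mul_cancel₀ hc.ne',
        one_mul]
      ring_nf
    · simp [if_neg hx]
  simp_rw [Pi.mul_apply, key]
  have hm2 : Measurable (exponentialPDF (1 + c)) :=
    (measurable_exponentialPDFReal (1 + c)).ennreal_ofReal
  rw [lintegral_const_mul _ hm2, lintegral_exponentialPDF_eq_one hc, mul_one]
lemma expMeasure_mean_ne_top : ∫⁻ x, ENNReal.ofReal x ∂(expMeasure 1) ≠ ∞ := by
  have hb : ∀ x : ℝ, ENNReal.ofReal x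
      ≤ ENNReal.ofReal 2 * ENNReal.ofReal (Real.exp (-((-1/2 : ℝ) * x))) := by
    intro x
    rw [← ENNReal.ofReal_mul (by norm_num)]
    apply ENNReal.ofReal_le_ofReal
    have hx2 : -((-1/2 : ℝ) * x) = x / 2 := by ring
    rw [hx2]
    have h := Real.add_one_le_exp (x / 2)
    linarith
  refine ne_top_of_le_ne_top ?_ (lintegral_mono hb)
  rw [lintegral_const_mul _
      ((by fun_prop : Measurable fun x : ℝ => Real.exp (-((-1/2 : ℝ) * x))).ennreal_ofReal),
      expMeasure_laplace (by norm_num)]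
  exact ENNReal.mul_ne_top ENNReal.ofReal_ne_top ENNReal.ofReal_ne_top

lemma iIndepFun_congr {ι Ω : Type*} {mΩ : MeasurableSpace Ω} {μ : Measure Ω}
    {β : ι → Type*} {mβ : ∀ i, MeasurableSpace (β i)} {f g : ∀ i, Ω → β i}
    (h : iIndepFun (m := mβ) f μ) (hfg : ∀ i, f i =ᵐ[μ] g i) : iIndepFun (m := mβ) g μ := by
  rw [iIndepFun_iff_measure_inter_preimage_eq_mul] at h ⊢
  intro S sets hsets
  have hae : ∀ i, μ (g i ⁻¹' sets i) = μ (f i ⁻¹' sets i) := by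
    intro i
    refine measure_congr ?_
    filter_upwards [hfg i] with ω hω
    show (g i ω ∈ sets i) = (f i ω ∈ sets i)
    rw [hω]
  have hae2 : μ (⋂ i ∈ S, g i ⁻¹' sets i) = μ (⋂ i ∈ S, f i ⁻¹' sets i) := by
    refine measure_congr ?_
    have hball : ∀ᵐ ω ∂μ, ∀ i ∈ (S : Set ι), f i ω = g i ω :=
      (MeasureTheory.ae_ball_iff S.countable_toSet).2 fun i _ => hfg i
    filter_upwards [hball] with ω hω
    show (ω ∈ ⋂ i ∈ S, g i ⁻¹' sets i) = (ω ∈ ⋂ i ∈ S, f i ⁻¹' sets i)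
    simp only [Set.mem_iInter, Set.mem_preimage, eq_iff_iff]
    constructor <;> intro hh i hi
    · rw [hω i (Finset.mem_coe.2 hi)]; exact hh i hi
    · rw [← hω i (Finset.mem_coe.2 hi)]; exact hh i hi
  rw [hae2, h S hsets]
  exact (Finset.prod_congr rfl fun i _ => hae i).symm

lemma iIndepFun_precomp {ι ι' Ω β : Type*} {mΩ : MeasurableSpace Ω} {μ : Measure Ω}
    [mβ : MeasurableSpace β] {f : ι → Ω → β}
    (h : iIndepFun (m := fun _ => mβ) f μ) {g : ι' → ι} (hg : Function.Injective g) :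
    iIndepFun (m := fun _ => mβ) (fun i => f (g i)) μ := by
  classical
  rw [iIndepFun_iff_measure_inter_preimage_eq_mul] at h ⊢
  intro S sets hsets
  set sets' : ι → Set β := fun i =>
    if hi : ∃ j ∈ S, g j = i then sets hi.choose else Set.univ with hsets'def
  have hkey : ∀ j ∈ S, sets' (g j) = sets j := by
    intro j hj
    have hex : ∃ j' ∈ S, g j' = g j := ⟨j, hj, rfl⟩
    simp only [hsets'def, dif_pos hex]
    rw [hg hex.choose_spec.2]
  have h1 := h (S.image g) (sets := sets') ?_
  · have hInter : (⋂ i ∈ S.image g, f i ⁻¹' sets' i) = ⋂ j ∈ S, f (g j) ⁻¹' sets j := by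
      ext ω
      simp only [Set.mem_iInter, Finset.mem_image]
      constructor
      · intro hh j hj
        have := hh (g j) ⟨j, hj, rfl⟩
        rwa [hkey j hj] at this
      · rintro hh i ⟨j, hj, rfl⟩
        rw [hkey j hj]
        exact hh j hj
    have hProd : (∏ i ∈ S.image g, μ (f i ⁻¹' sets' i)) = ∏ j ∈ S, μ (f (g j) ⁻¹' sets j) := by
      rw [Finset.prod_image (fun a _ b _ hab => hg hab)]
      exact Finset.prod_congr rfl fun j hj => by rw [hkey j hj]
    rw [hInter, hProd] at h1
    exact h1
  · rintro i hi
    by_cases hex : ∃ j ∈ S, g j = i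
    · simp only [hsets'def, dif_pos hex]
      exact hsets hex.choose hex.choose_spec.1
    · simp only [hsets'def, dif_neg hex]
      exact MeasurableSet.univ

lemma tsum_eq_toReal_tsum_ofReal {ι : Type*} {f : ι → ℝ} (hf : ∀ i, 0 ≤ f i) :
    ∑' i, f i = (∑' i, ENNReal.ofReal (f i)).toReal := by
  by_cases hs : Summable f
  · rw [← ENNReal.ofReal_tsum_of_nonneg hf hs, ENNReal.toReal_ofReal (tsum_nonneg hf)]
  · rw [tsum_eq_zero_of_not_summable hs]
    by_cases htop : (∑' i, ENNReal.ofReal (f i)) = ∞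
    · rw [htop]; rfl
    · exfalso
      apply hs
      have := ENNReal.summable_toReal htop
      simpa [ENNReal.toReal_ofReal (hf _)] using this

end Aux

/-- Conditional success probability under Rayleigh fading: for independent unit-rate
exponentials h and (h_y), P(h > t ∑ h_y a_y) = ∏ 1/(1 + t a_y). -/
theorem rayleigh_success_probability
    {Ω : Type*} {mΩ : MeasurableSpace Ω} (μ : Measure Ω) [IsProbabilityMeasure μ]
    {Y : Type*} [Countable Y]
    (h : Ω → ℝ) (hy : Y → Ω → ℝ) (a : Y → ℝ)
    (ha : ∀ y, 0 ≤ a y) (hsum : Summable a)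
    (hind : iIndepFun (m := fun _ : Option Y => Real.measurableSpace)
      (fun o => o.elim h hy) μ)
    (hexp : Measure.map h μ = expMeasure 1)
    (hexpy : ∀ y, Measure.map (hy y) μ = expMeasure 1)
    (t : ℝ) (ht : 0 < t) :
    (μ {ω | h ω > t * ∑' y, hy y ω * a y}).toReal = ∏' y, 1 / (1 + t * a y) := by
  classical
  have hPexp : IsProbabilityMeasure (expMeasure 1) := isProbabilityMeasure_expMeasure one_pos
  -- a.e. measurable versions
  have hmh : AEMeasurable h μ := by
    by_contra hc
    rw [Measure.map_of_not_aemeasurable hc] at hexp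
    exact (one_ne_zero : (1 : ℝ≥0∞) ≠ 0) (by rw [← measure_univ (μ := expMeasure 1), ← hexp]; simp)
  have hmhy : ∀ y, AEMeasurable (hy y) μ := by
    intro y
    by_contra hc
    have h0 := hexpy y
    rw [Measure.map_of_not_aemeasurable hc] at h0
    exact (one_ne_zero : (1 : ℝ≥0∞) ≠ 0)
      (by rw [← measure_univ (μ := expMeasure 1), ← h0]; simp)
  set h' : Ω → ℝ := hmh.mk h with hh'def
  have hh'm : Measurable h' := hmh.measurable_mk
  have heq : h =ᵐ[μ] h' := hmh.ae_eq_mk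
  set hy' : Y → Ω → ℝ := fun y => (hmhy y).mk (hy y) with hhy'def
  have hhy'm : ∀ y, Measurable (hy' y) := fun y => (hmhy y).measurable_mk
  have heqy : ∀ y, hy y =ᵐ[μ] hy' y := fun y => (hmhy y).ae_eq_mk
  have hexp' : μ.map h' = expMeasure 1 := (Measure.map_congr heq).symm.trans hexp
  have hexpy' : ∀ y, μ.map (hy' y) = expMeasure 1 :=
    fun y => (Measure.map_congr (heqy y)).symm.trans (hexpy y)
  -- nonnegativity a.e.
  have hy'nonneg : ∀ y, ∀ᵐ ω ∂μ, 0 ≤ hy' y ω := by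
    intro y
    rw [ae_iff]
    have : {ω | ¬ 0 ≤ hy' y ω} = hy' y ⁻¹' (Iio 0) := by
      ext ω; simp [not_le]
    rw [this, ← Measure.map_apply (hhy'm y) measurableSet_Iio, hexpy' y, expMeasure_Iio_zero]
  -- nonneg modification
  set N : Y → Ω → ℝ := fun y ω => max (hy' y ω) 0 with hNdef
  have hNm : ∀ y, Measurable (N y) := fun y => (hhy'm y).max measurable_const
  have hNnonneg : ∀ y ω, 0 ≤ N y ω := fun y ω => le_max_right _ _
  have hNeq : ∀ y, hy' y =ᵐ[μ] N y := by
    intro y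
    filter_upwards [hy'nonneg y] with ω hω
    simp [hNdef, max_eq_left hω]
  have hmapN : ∀ y, μ.map (N y) = expMeasure 1 :=
    fun y => (Measure.map_congr (hNeq y)).symm.trans (hexpy' y)
  set X : Y → Ω → ℝ := fun y ω => N y ω * a y with hXdef
  have hXm : ∀ y, Measurable (X y) := fun y => (hNm y).mul_const _
  have hXnonneg : ∀ y ω, 0 ≤ X y ω := fun y ω => mul_nonneg (hNnonneg y ω) (ha y)
  set S' : Ω → ℝ := fun ω => ∑' y, X y ω with hS'def
  have hS'nonneg : ∀ ω, 0 ≤ S' ω := fun ω => tsum_nonneg (fun y => hXnonneg y ω)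
  set F : Ω → ℝ≥0∞ := fun ω => ∑' y, ENNReal.ofReal (X y ω) with hFdef
  have hFm : Measurable F := Measurable.ennreal_tsum fun y => (hXm y).ennreal_ofReal
  have hS'eqF : ∀ ω, S' ω = (F ω).toReal :=
    fun ω => tsum_eq_toReal_tsum_ofReal (fun y => hXnonneg y ω)
  have hS'm : Measurable S' := by
    have : S' = fun ω => (F ω).toReal := funext hS'eqF
    rw [this]
    exact hFm.ennreal_toReal
  -- independence transfers
  have ind0 : iIndepFun (m := fun _ : Option Y => Real.measurableSpace)
      (fun o => o.elim h' hy') μ := by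
    refine iIndepFun_congr hind ?_
    intro o
    cases o with
    | none => exact heq
    | some y => exact heqy y
  set Fam : Option Y → Ω → ℝ := fun o => o.elim h' N with hFamdef
  have hFamm : ∀ o, Measurable (Fam o) := by
    intro o; cases o with
    | none => exact hh'm
    | some y => exact hNm y
  have ind1 : iIndepFun (m := fun _ : Option Y => Real.measurableSpace) Fam μ := by
    have := ind0.comp (mγ := fun _ : Option Y => Real.measurableSpace)
        (g := fun o : Option Y => o.elim id (fun _ x => max x 0)) ?_
    · convert this using 1
      funext o
      cases o <;> rfl
    · intro o; cases o with
      | none => exact measurable_id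
      | some y => exact measurable_id.max measurable_const
  have ind2 : iIndepFun (m := fun _ : Y => Real.measurableSpace) N μ := by
    have := iIndepFun_precomp ind1 (Option.some_injective Y)
    exact this
  have indX : iIndepFun (m := fun _ : Y => Real.measurableSpace) X μ :=
    ind2.comp (fun y x => x * a y) (fun y => measurable_mul_const _)
  -- independence of S' and h'
  have hIndepFun : IndepFun S' h' μ := by
    set m : Option Y → MeasurableSpace Ω :=
      fun o => Real.measurableSpace.comap (Fam o) with hmdef
    have h_le : ∀ o, m o ≤ mΩ := fun o => measurable_iff_comap_le.1 (hFamm o)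
    have hdisj : Disjoint (Set.range (some : Y → Option Y)) ({none} : Set (Option Y)) := by
      simp [Set.disjoint_left]
    have hIndep := indep_iSup_of_disjoint h_le ind1.iIndep hdisj
    have hS'm' : Measurable[⨆ o ∈ Set.range (some : Y → Option Y), m o] S' := by
      have hNm' : ∀ y, Measurable[⨆ o ∈ Set.range (some : Y → Option Y), m o] (N y) := by
        intro y
        refine measurable_iff_comap_le.2 ?_
        exact le_trans (le_of_eq rfl)
          (le_iSup₂ (f := fun (o : Option Y) (_ : o ∈ Set.range some) => m o)
            (some y) ⟨y, rfl⟩)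
      have : S' = fun ω => (∑' y, ENNReal.ofReal (N y ω * a y)).toReal := funext hS'eqF
      rw [this]
      exact (Measurable.ennreal_tsum fun y => ((hNm' y).mul_const _).ennreal_ofReal).ennreal_toReal
    have hh'c : Measurable[⨆ o ∈ ({none} : Set (Option Y)), m o] h' := by
      refine measurable_iff_comap_le.2 ?_
      exact le_trans (le_of_eq rfl)
        (le_iSup₂ (f := fun (o : Option Y) (_ : o ∈ ({none} : Set (Option Y))) => m o)
          none rfl)
    rw [IndepFun_iff_Indep, Indep_iff]
    intro s1 s2 hs1 hs2
    exact (Indep_iff _ _ _).1 hIndep s1 s2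
      (measurable_iff_comap_le.1 hS'm' s1 hs1) (measurable_iff_comap_le.1 hh'c s2 hs2)
  -- the key identity : probability = Laplace functional
  have hkey : (μ {ω | t * S' ω < h' ω}).toReal = ∫ ω, Real.exp (-(t * S' ω)) ∂μ := by
    have hset : MeasurableSet {p : ℝ × ℝ | t * p.1 < p.2} :=
      measurableSet_lt (measurable_fst.const_mul t) measurable_snd
    have hmap : μ.map (fun ω => (S' ω, h' ω)) = (μ.map S').prod (μ.map h') :=
      (indepFun_iff_map_prod_eq_prod_map_map hS'm.aemeasurable hh'm.aemeasurable).1 hIndepFun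
    have h1 : μ {ω | t * S' ω < h' ω}
        = (μ.map S').prod (expMeasure 1) {p : ℝ × ℝ | t * p.1 < p.2} := by
      rw [← hexp', ← hmap, Measure.map_apply (hS'm.prodMk hh'm) hset]
      rfl
    rw [h1, Measure.prod_apply hset]
    have h2 : ∀ x : ℝ, (Prod.mk x ⁻¹' {p : ℝ × ℝ | t * p.1 < p.2}) = Ioi (t * x) := fun x => rfl
    simp_rw [h2]
    have h3 : ∀ᵐ x ∂(μ.map S'), expMeasure 1 (Ioi (t * x))
        = ENNReal.ofReal (Real.exp (-(t * x))) := by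
      have hx0 : ∀ᵐ x ∂(μ.map S'), 0 ≤ x := by
        exact (ae_map_iff hS'm.aemeasurable measurableSet_Ici).2
          (Eventually.of_forall hS'nonneg)
      filter_upwards [hx0] with x hx
      exact expMeasure_Ioi (mul_nonneg ht.le hx)
    rw [lintegral_congr_ae h3,
      lintegral_map ((by fun_prop : Measurable fun x : ℝ => Real.exp (-(t * x))).ennreal_ofReal)
        hS'm,
      integral_eq_lintegral_of_nonneg_ae
        (Eventually.of_forall fun ω => (Real.exp_pos _).le)
        ((by fun_prop : Measurable fun ω => Real.exp (-(t * S' ω))).aestronglyMeasurable)]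
  -- a.e. summability
  have hFsum : ∫⁻ ω, F ω ∂μ ≠ ∞ := by
    have e1 : ∫⁻ ω, F ω ∂μ = ∑' y, ∫⁻ ω, ENNReal.ofReal (X y ω) ∂μ :=
      lintegral_tsum fun y => ((hXm y).ennreal_ofReal).aemeasurable
    have e2 : ∀ y, ∫⁻ ω, ENNReal.ofReal (X y ω) ∂μ
        = (∫⁻ x, ENNReal.ofReal x ∂(expMeasure 1)) * ENNReal.ofReal (a y) := by
      intro y
      have : ∀ ω, ENNReal.ofReal (X y ω)
          = ENNReal.ofReal (N y ω) * ENNReal.ofReal (a y) := by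
        intro ω
        rw [hXdef]
        exact ENNReal.ofReal_mul (hNnonneg y ω)
      simp_rw [this]
      rw [lintegral_mul_const _ (hNm y).ennreal_ofReal,
        ← lintegral_map ENNReal.measurable_ofReal (hNm y), hmapN y]
    rw [e1]
    simp_rw [e2]
    rw [ENNReal.tsum_mul_left, ← ENNReal.ofReal_tsum_of_nonneg ha hsum]
    exact ENNReal.mul_ne_top expMeasure_mean_ne_top ENNReal.ofReal_ne_top
  have hae_sum : ∀ᵐ ω ∂μ, Summable fun y => X y ω := by
    filter_upwards [ae_lt_top hFm hFsum] with ω hω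
    have h1 := ENNReal.summable_toReal hω.ne
    have h2 : (fun y => (ENNReal.ofReal (X y ω)).toReal) = fun y => X y ω :=
      funext fun y => ENNReal.toReal_ofReal (hXnonneg y ω)
    rwa [h2] at h1
  -- finite product identity
  have hfin : ∀ s : Finset Y, (∫ ω, Real.exp (-(t * ∑ y ∈ s, X y ω)) ∂μ)
      = ∏ y ∈ s, (1 / (1 + t * a y)) := by
    intro s
    have hmgf := indX.mgf_sum (t := -t) hXm s
    have hL : ∫ ω, Real.exp (-(t * ∑ y ∈ s, X y ω)) ∂μ = mgf (∑ y ∈ s, X y) μ (-t) := by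
      simp only [mgf]
      congr 1
      funext ω
      rw [Finset.sum_apply, neg_mul]
    rw [hL, hmgf]
    refine Finset.prod_congr rfl fun y _ => ?_
    have hc : (0:ℝ) < 1 + t * a y := by
      have h0 := mul_nonneg ht.le (ha y); linarith
    have h1 : mgf (X y) μ (-t) = ∫ ω, Real.exp (-((t * a y) * N y ω)) ∂μ := by
      simp only [mgf]
      congr 1
      funext ω
      rw [hXdef]
      ring_nf
    rw [h1, integral_eq_lintegral_of_nonneg_ae
        (Eventually.of_forall fun ω => (Real.exp_pos _).le)
        ((by fun_prop : Measurable fun ω => Real.exp (-((t * a y) * N y ω))).aestronglyMeasurable),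
      ← lintegral_map
        ((by fun_prop : Measurable fun x : ℝ => Real.exp (-((t * a y) * x))).ennreal_ofReal)
        (hNm y),
      hmapN y, expMeasure_laplace (by linarith), ENNReal.toReal_ofReal (div_nonneg zero_le_one hc.le)]
  -- dominated convergence
  have hTend : Tendsto (fun s : Finset Y => ∫ ω, Real.exp (-(t * ∑ y ∈ s, X y ω)) ∂μ)
      atTop (𝓝 (∫ ω, Real.exp (-(t * S' ω)) ∂μ)) := by
    refine tendsto_integral_filter_of_dominated_convergence (bound := fun _ => (1:ℝ)) ?_ ?_ ?_ ?_
    · refine Eventually.of_forall fun s => Measurable.aestronglyMeasurable ?_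
      exact ((Finset.measurable_sum s fun y _ => hXm y).const_mul t).neg.exp
    · refine Eventually.of_forall fun s => Eventually.of_forall fun ω => ?_
      rw [Real.norm_eq_abs, Real.abs_exp]
      rw [Real.exp_le_one_iff]
      exact neg_nonpos.2 (mul_nonneg ht.le (Finset.sum_nonneg fun y _ => hXnonneg y ω))
    · exact integrable_const 1
    · filter_upwards [hae_sum] with ω hω
      have hh : HasSum (fun y => X y ω) (S' ω) := hω.hasSum
      have hcont : Continuous fun x : ℝ => Real.exp (-(t * x)) := by fun_prop
      exact (hcont.tendsto (S' ω)).comp hh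
  -- assembly
  have hasprod : HasProd (fun y => 1 / (1 + t * a y)) (∫ ω, Real.exp (-(t * S' ω)) ∂μ) := by
    have he : (fun s : Finset Y => ∏ y ∈ s, (1 / (1 + t * a y)))
        = fun s => ∫ ω, Real.exp (-(t * ∑ y ∈ s, X y ω)) ∂μ := funext fun s => (hfin s).symm
    rw [HasProd, he]
    exact hTend
  rw [hasprod.tprod_eq, ← hkey]
  congr 1
  refine measure_congr ?_
  have hgood : ∀ᵐ ω ∂μ, h ω = h' ω ∧ ∀ y, hy y ω = hy' y ω ∧ 0 ≤ hy' y ω := by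
    refine heq.and ?_
    rw [ae_all_iff]
    exact fun y => ((heqy y).and (hy'nonneg y))
  filter_upwards [hgood] with ω hω
  obtain ⟨h1, h2⟩ := hω
  have hts : (∑' y, hy y ω * a y) = S' ω := by
    refine tsum_congr fun y => ?_
    rw [(h2 y).1, hXdef]
    show hy' y ω * a y = max (hy' y ω) 0 * a y
    rw [max_eq_left (h2 y).2]
  show (h ω > t * ∑' y, hy y ω * a y) = (t * S' ω < h' ω)
  rw [gt_iff_lt, hts, h1]
end

section
/- Let (a_n)_{n≥1} be positive reals with I := ∑_{n≥1} a_n < ∞ and I > 0. For ε ∈ (0,1), let t(ε) > 0 be the unique solution of ∏_{n≥1} 1/(1 + t a_n) = 1 − ε. Then t(ε) ~ ε/I as ε → 0⁺, i.e., lim_{ε→0⁺} t(ε)·I/ε = 1. -/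
open Filter

/-- Ultrareliable regime: the SIR threshold t(ε) satisfies t(ε) ~ ε/I as ε → 0⁺. -/
theorem ultrareliable_asymptotics
    (a : ℕ → ℝ) (ha : ∀ n, 0 < a n) (hsum : Summable a)
    (I : ℝ) (hI : I = ∑' n, a n) (hIpos : 0 < I)
    (t : ℝ → ℝ)
    (ht_pos : ∀ ε ∈ Set.Ioo (0 : ℝ) 1, 0 < t ε)
    (ht_eq : ∀ ε ∈ Set.Ioo (0 : ℝ) 1, ∏' n, 1 / (1 + t ε * a n) = 1 - ε) :
    Tendsto (fun ε => t ε * I / ε) (nhdsWithin 0 (Set.Ioi 0)) (nhds 1) := by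
  have ha0 := ha 0
  -- key pointwise bounds for ε ∈ (0,1)
  have key : ∀ ε ∈ Set.Ioo (0:ℝ) 1,
      1 ≤ t ε * I / ε ∧ t ε * I / ε ≤ (1 + ε * I / ((1 - ε) * a 0)) / (1 - ε) := by
    rintro ε ⟨hε0, hε1⟩
    set s := t ε with hs
    have hspos : 0 < s := ht_pos ε ⟨hε0, hε1⟩
    have h1ε : 0 < 1 - ε := by linarith
    have hpos : ∀ n, 0 < 1 + s * a n := fun n => by nlinarith [ha n]
    have hg_nonneg : ∀ n, 0 ≤ Real.log (1 + s * a n) := fun n =>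
      Real.log_nonneg (by nlinarith [ha n])
    have hg_le : ∀ n, Real.log (1 + s * a n) ≤ s * a n := fun n => by
      have := Real.log_le_sub_one_of_pos (hpos n); linarith
    have hgsum : Summable (fun n => Real.log (1 + s * a n)) :=
      Summable.of_nonneg_of_le hg_nonneg hg_le (hsum.mul_left s)
    set L := ∑' n, Real.log (1 + s * a n) with hL
    have hprod : ∏' n, (1 / (1 + s * a n)) = 1 - ε := ht_eq ε ⟨hε0, hε1⟩
    -- identity: exp(-L) = 1 - ε, so L = -log(1-ε)
    have hexp : Real.exp (-L) = 1 - ε := by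
      have h := Real.rexp_tsum_eq_tprod (f := fun n => 1 / (1 + s * a n))
        (fun n => one_div_pos.mpr (hpos n))
        (by
          simpa only [one_div, Real.log_inv] using hgsum.neg)
      have h2 := h
      simp only [Function.comp, one_div, Real.log_inv] at h2
      rw [tsum_neg] at h2
      have hp' : ∏' n, (1 + s * a n)⁻¹ = 1 - ε := by simpa [one_div] using hprod
      rw [hp'] at h2
      rw [hL]
      exact h2
    have hLval : L = -Real.log (1 - ε) := by
      have := Real.log_exp (-L)
      rw [hexp] at this
      linarith
    -- lower bound: ε ≤ L ≤ s * I
    have hLle : L ≤ s * I := by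
      have h1 : L ≤ ∑' n, s * a n :=
        Summable.tsum_le_tsum hg_le hgsum (hsum.mul_left s)
      rwa [tsum_mul_left, ← hI] at h1
    have hεL : ε ≤ L := by
      have := Real.log_le_sub_one_of_pos h1ε
      rw [hLval]; linarith
    have hlow : 1 ≤ s * I / ε := by
      rw [le_div_iff₀ hε0]; linarith
    -- upper bound pieces
    have hanI : ∀ n, a n ≤ I := fun n => by
      rw [hI]; exact Summable.le_tsum hsum n fun m _ => (ha m).le
    have hglow : ∀ n, s * a n / (1 + s * I) ≤ Real.log (1 + s * a n) := by
      intro n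
      have hD : (0:ℝ) < 1 + s * I := by nlinarith
      have hne : (1 + s * a n) ≠ 0 := (hpos n).ne'
      have e1 : s * a n / (1 + s * a n) = 1 - (1 + s * a n)⁻¹ := by
        field_simp; ring
      have e2 : s * a n / (1 + s * I) ≤ s * a n / (1 + s * a n) :=
        div_le_div_of_nonneg_left (mul_pos hspos (ha n)).le (hpos n) (by nlinarith [hanI n])
      calc s * a n / (1 + s * I) ≤ s * a n / (1 + s * a n) := e2
        _ = 1 - (1 + s * a n)⁻¹ := e1
        _ ≤ Real.log (1 + s * a n) := Real.one_sub_inv_le_log_of_pos (hpos n)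
    have hD : (0:ℝ) < 1 + s * I := by nlinarith
    have hsumlow : Summable (fun n => s * a n / (1 + s * I)) := by
      simpa [mul_div_assoc, div_eq_mul_inv, mul_comm, mul_assoc, mul_left_comm] using
        (hsum.mul_left (s / (1 + s * I)))
    have hLlow : s * I / (1 + s * I) ≤ L := by
      have h1 : ∑' n, s * a n / (1 + s * I) ≤ L :=
        Summable.tsum_le_tsum hglow hsumlow hgsum
      have h2 : ∑' n, s * a n / (1 + s * I) = s * I / (1 + s * I) := by
        have : (fun n => s * a n / (1 + s * I)) = fun n => (s / (1 + s * I)) * a n := by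
          funext n; ring
        rw [this, tsum_mul_left, ← hI]; ring
      rwa [h2] at h1
    -- s is small: s ≤ ε / ((1-ε) * a 0)
    have hg0 : Real.log (1 + s * a 0) ≤ L := Summable.le_tsum hgsum 0 fun n _ => hg_nonneg n
    have hsmall : s * a 0 ≤ ε / (1 - ε) := by
      have h1 : Real.log (1 + s * a 0) ≤ Real.log ((1 - ε)⁻¹) := by
        rw [Real.log_inv]; rw [hLval] at hg0; linarith
      have h2 : 1 + s * a 0 ≤ (1 - ε)⁻¹ :=
        (Real.log_le_log_iff (hpos 0) (inv_pos.2 h1ε)).mp h1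
      have e : ε / (1 - ε) = (1 - ε)⁻¹ - 1 := by field_simp; ring
      rw [e]; linarith
    have hsI : s * I ≤ ε * I / ((1 - ε) * a 0) := by
      have hs' : s ≤ ε / ((1 - ε) * a 0) := by
        rw [le_div_iff₀ (by positivity)]
        calc s * ((1 - ε) * a 0) = (s * a 0) * (1 - ε) := by ring
          _ ≤ (ε / (1 - ε)) * (1 - ε) := by gcongr
          _ = ε := by field_simp
      calc s * I ≤ (ε / ((1 - ε) * a 0)) * I := by gcongr
        _ = ε * I / ((1 - ε) * a 0) := by ring
    -- L ≤ ε / (1 - ε)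
    have hLup : L ≤ ε / (1 - ε) := by
      have := Real.one_sub_inv_le_log_of_pos h1ε
      rw [hLval]
      have : -Real.log (1 - ε) ≤ (1 - ε)⁻¹ - 1 := by linarith
      have e : (1 - ε)⁻¹ - 1 = ε / (1 - ε) := by field_simp; ring
      linarith [e ▸ this]
    -- combine: s*I ≤ L*(1+s*I) ≤ (ε/(1-ε)) * (1 + ε*I/((1-ε)*a 0))
    have hmain : s * I ≤ (ε / (1 - ε)) * (1 + ε * I / ((1 - ε) * a 0)) := by
      have h1 : s * I ≤ L * (1 + s * I) := by
        have := hLlow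
        rw [div_le_iff₀ hD] at this
        linarith
      have hB : (0:ℝ) ≤ ε * I / ((1 - ε) * a 0) := by positivity
      calc s * I ≤ L * (1 + s * I) := h1
        _ ≤ (ε / (1 - ε)) * (1 + ε * I / ((1 - ε) * a 0)) := by
            have hL0 : 0 ≤ L := le_trans hε0.le hεL
            have : 1 + s * I ≤ 1 + ε * I / ((1 - ε) * a 0) := by linarith
            exact mul_le_mul hLup this (by nlinarith) (by positivity)
    refine ⟨hlow, ?_⟩
    rw [div_le_div_iff₀ hε0 h1ε]
    have : (ε / (1 - ε)) * (1 + ε * I / ((1 - ε) * a 0)) * (1 - ε)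
        = ε * (1 + ε * I / ((1 - ε) * a 0)) := by field_simp
    nlinarith [mul_le_mul_of_nonneg_right hmain h1ε.le, this]
  -- the upper bound tends to 1
  have hub : Tendsto (fun ε : ℝ => (1 + ε * I / ((1 - ε) * a 0)) / (1 - ε))
      (nhds 0) (nhds 1) := by
    have hc : ContinuousAt (fun ε : ℝ => (1 + ε * I / ((1 - ε) * a 0)) / (1 - ε)) 0 := by
      apply ContinuousAt.div
      · apply ContinuousAt.add continuousAt_const
        apply ContinuousAt.div (by fun_prop) (by fun_prop)
        simp [ha0.ne']
      · fun_prop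
      · norm_num
    have := hc.tendsto
    simpa using this
  have hmem : Set.Ioo (0:ℝ) 1 ∈ nhdsWithin (0:ℝ) (Set.Ioi 0) :=
    Ioo_mem_nhdsGT (by norm_num)
  refine tendsto_of_tendsto_of_tendsto_of_le_of_le' tendsto_const_nhds
    (hub.mono_left nhdsWithin_le_nhds) ?_ ?_
  · filter_upwards [hmem] with ε hε using (key ε hε).1
  · filter_upwards [hmem] with ε hε using (key ε hε).2
end
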